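/- Let f : ℝ → ℝ be continuous, 1-periodic, with ∫₀¹ f = 0 and |f| ≤ M. Let a, q be positive integers with gcd(a,q) = gcd(a+1,q) = 1. Then for every positive integer t, |∫_{a/q}^{(a+1)/q} ∑_{k=1}^t f(kx) dx| ≤ M(q−1). -/
import Mathlib


open MeasureTheory Finset

theorem stmt_10 (f : ℝ → ℝ) (M : ℝ) (hf : Continuous f)
    (hper : Function.Periodic f 1)
    (hmean : (∫ x in (0:ℝ)..1, f x) = 0)
    (hbound : ∀ x, |f x| ≤ M)
    (a q : ℕ) (ha : 0 < a) (hq : 0 < q)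
    (hgcd : Nat.gcd a q = 1) (hgcd' : Nat.gcd (a + 1) q = 1)
    (t : ℕ) (ht : 0 < t) :
    |∫ x in ((a : ℝ)/q)..(((a : ℝ) + 1)/q), ∑ k ∈ Finset.Icc 1 t, f ((k : ℝ) * x)| ≤
      M * (q - 1) := by
  haveI : NeZero q := ⟨hq.ne'⟩
  have hM : 0 ≤ M := le_trans (abs_nonneg _) (hbound 0)
  have hint : ∀ u v : ℝ, IntervalIntegrable f volume u v := fun u v =>
    hf.intervalIntegrable u v
  set h : ℝ → ℝ := fun z => ∫ x in (0:ℝ)..z, f x with hh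
  have hdiff : ∀ u v : ℝ, h v - h u = ∫ x in u..v, f x := fun u v =>
    intervalIntegral.integral_interval_sub_left (hint 0 v) (hint 0 u)
  have hper1 : Function.Periodic h 1 := by
    intro z
    have h1 : h (z + 1) - h z = ∫ x in z..z + 1, f x := hdiff z (z + 1)
    have h2 : (∫ x in z..z + 1, f x) = ∫ x in (0:ℝ)..0 + 1, f x :=
      hper.intervalIntegral_add_eq z 0
    rw [h2] at h1
    simp only [zero_add] at h1
    rw [hmean] at h1 <;> linarith [h1]
  have hpernat : ∀ (z : ℝ) (n : ℕ), h (z + n) = h z := by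
    intro z n
    have := (hper1.nat_mul n) z
    simpa using this
  -- key function on residues
  set φ : ZMod q → ℝ := fun r => h ((r.val : ℝ) / q) with hφ
  have hval : ∀ n : ℕ, h ((n : ℝ) / q) = φ ((n : ZMod q)) := by
    intro n
    have hmod : ((n % q : ℕ) : ℝ) / q + (n / q : ℕ) = (n : ℝ) / q := by
      have : (q : ℝ) ≠ 0 := Nat.cast_ne_zero.mpr hq.ne'
      field_simp
      push_cast
      have := Nat.mod_add_div n q
      have : ((n % q : ℕ) : ℝ) + (q : ℝ) * ((n / q : ℕ) : ℝ) = n := by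
        exact_mod_cast congrArg (Nat.cast : ℕ → ℝ) this
      linarith
    rw [← hmod, hpernat]
    simp only [hφ, ZMod.val_natCast]
  -- g and its properties
  set g : ℕ → ℝ := fun k => φ (((a + 1) * k : ℕ) : ZMod q) - φ ((a * k : ℕ) : ZMod q) with hg
  have hgbound : ∀ k, |g k| ≤ M := by
    intro k
    have hq1 : (1:ℝ) ≤ q := by exact_mod_cast hq
    have hb : ∀ r : ZMod q, 0 ≤ (r.val : ℝ) / q ∧ (r.val : ℝ) / q ≤ 1 := by
      intro r
      constructor
      · positivity
      · rw [div_le_one (by linarith)]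
        exact_mod_cast (r.val_lt).le
    set u := ((((a + 1) * k : ℕ) : ZMod q).val : ℝ) / q
    set v := (((a * k : ℕ) : ZMod q).val : ℝ) / q
    have hgk : g k = ∫ x in v..u, f x := by rw [hg]; exact hdiff v u
    rw [hgk]
    have := intervalIntegral.norm_integral_le_of_norm_le_const
      (C := M) (a := v) (b := u) (f := f) (fun x _ => by rw [Real.norm_eq_abs]; exact hbound x)
    rw [Real.norm_eq_abs] at this
    refine this.trans ?_
    have h1 := hb (((a + 1) * k : ℕ) : ZMod q)
    have h2 := hb ((a * k : ℕ) : ZMod q)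
    have : |u - v| ≤ 1 := by
      rw [abs_sub_le_iff]
      constructor <;> linarith [h1.1, h1.2, h2.1, h2.2]
    nlinarith [abs_nonneg (u - v)]
  -- complete block sums vanish
  have hrangesum : ∀ F : ZMod q → ℝ, ∑ k ∈ range q, F ((k : ℕ) : ZMod q) = ∑ r : ZMod q, F r := by
    intro F
    refine Finset.sum_nbij' (fun k => ((k : ℕ) : ZMod q)) (fun r => r.val) ?_ ?_ ?_ ?_ ?_
    · intro k hk; exact Finset.mem_univ _
    · intro r hr; exact Finset.mem_range.mpr r.val_lt
    · intro k hk; exact ZMod.val_natCast_of_lt (Finset.mem_range.mp hk)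
    · intro r hr; exact ZMod.natCast_rightInverse r
    · intro k hk; rfl
  have hunit : ∀ (b : ℕ), Nat.gcd b q = 1 →
      ∑ r : ZMod q, φ ((b : ZMod q) * r) = ∑ r : ZMod q, φ r := by
    intro b hb
    have : Function.Bijective (fun r : ZMod q => (ZMod.unitOfCoprime b hb : ZMod q) * r) :=
      Units.mulLeft_bijective _
    rw [ZMod.coe_unitOfCoprime] at this
    exact Finset.sum_bijective _ this (fun r => by simp) (fun r _ => rfl)
  have hblockb : ∀ (b : ℕ), Nat.gcd b q = 1 →
      ∑ k ∈ range q, φ (((b * k : ℕ) : ZMod q)) = ∑ r : ZMod q, φ r := by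
    intro b hb
    have : ∀ k : ℕ, (((b * k : ℕ) : ZMod q)) = (b : ZMod q) * ((k : ℕ) : ZMod q) := by
      intro k; push_cast; ring
    simp_rw [this]
    rw [hrangesum (fun r => φ ((b : ZMod q) * r))]
    exact hunit b hb
  have hrangeblock : ∑ k ∈ range q, g k = 0 := by
    rw [hg]
    rw [Finset.sum_sub_distrib, hblockb (a+1) hgcd', hblockb a hgcd, sub_self]
  have hgper : ∀ k, g (k + q) = g k := by
    intro k
    have e1 : (((a + 1) * (k + q) : ℕ) : ZMod q) = (((a + 1) * k : ℕ) : ZMod q) := by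
      push_cast [ZMod.natCast_self]; ring
    have e2 : ((a * (k + q) : ℕ) : ZMod q) = ((a * k : ℕ) : ZMod q) := by
      push_cast [ZMod.natCast_self]; ring
    simp only [hg, e1, e2]
  have hblock : ∀ c : ℕ, ∑ k ∈ Finset.Ico c (c + q), g k = 0 := by
    intro c
    induction c with
    | zero =>
      rw [show 0 + q = q from Nat.zero_add q, ← Finset.range_eq_Ico]
      exact hrangeblock
    | succ c ih =>
      have h1 : ∑ k ∈ Finset.Ico (c+1) (c+1+q), g k
          = ∑ k ∈ Finset.Ico (c+1) (c+q), g k + g (c + q) := by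
        have : c + 1 + q = (c + q) + 1 := by omega
        rw [this, Finset.sum_Ico_succ_top (by omega)]
      have h2 : ∑ k ∈ Finset.Ico c (c+q), g k
          = g c + ∑ k ∈ Finset.Ico (c+1) (c+q), g k :=
        Finset.sum_eq_sum_Ico_succ_bot (by omega) g
      rw [h1, hgper c]
      rw [h2] at ih
      linarith
  -- partial sums bounded
  set S : ℕ → ℝ := fun n => ∑ j ∈ range n, g (j + 1) with hS
  have hSbound : ∀ n, |S n| ≤ M * (q - 1) := by
    intro n
    induction n using Nat.strong_induction_on with
    | _ n ih =>
      rcases lt_or_ge n q with hn | hn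
      · have h1 : |S n| ≤ ∑ j ∈ range n, |g (j + 1)| := Finset.abs_sum_le_sum_abs _ _
        have h2 : ∑ j ∈ range n, |g (j + 1)| ≤ ∑ j ∈ range n, M :=
          Finset.sum_le_sum (fun j _ => hgbound (j + 1))
        have h3 : ∑ j ∈ range n, M = n * M := by
          rw [Finset.sum_const, Finset.card_range, nsmul_eq_mul]
        have h4 : (n : ℝ) ≤ (q : ℝ) - 1 := by
          have : (n : ℝ) + 1 ≤ q := by exact_mod_cast hn
          linarith
        calc |S n| ≤ (n : ℝ) * M := by rw [← h3]; exact h1.trans h2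
          _ ≤ ((q : ℝ) - 1) * M := mul_le_mul_of_nonneg_right h4 hM
          _ = M * (q - 1) := by ring
      · have hsplit : S n = S (n - q) + ∑ j ∈ Finset.Ico (n - q) n, g (j + 1) := by
          rw [hS]
          simp only [Finset.range_eq_Ico]
          rw [← Finset.sum_Ico_consecutive (fun j => g (j+1)) (Nat.zero_le (n - q)) (by omega)]
        have hz : ∑ j ∈ Finset.Ico (n - q) n, g (j + 1) = 0 := by
          have h1 : ∑ j ∈ Finset.Ico (n - q) n, g (j + 1)
              = ∑ k ∈ Finset.Ico (n - q + 1) (n + 1), g k := by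
            rw [Finset.sum_Ico_eq_sum_range, Finset.sum_Ico_eq_sum_range]
            have e : n + 1 - (n - q + 1) = n - (n - q) := by omega
            rw [e]
            exact Finset.sum_congr rfl (fun i _ => by congr 1; omega)
          rw [h1]
          have : n + 1 = (n - q + 1) + q := by omega
          rw [this]
          exact hblock (n - q + 1)
        rw [hsplit, hz, add_zero]
        exact ih (n - q) (by omega)
  -- rewrite the integral
  have hqR : (q : ℝ) ≠ 0 := Nat.cast_ne_zero.mpr hq.ne'
  have hintk : ∀ k : ℕ, k ∈ Finset.Icc 1 t →
      IntervalIntegrable (fun x => f ((k : ℝ) * x)) volume ((a : ℝ)/q) (((a : ℝ) + 1)/q) := by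
    intro k _
    exact (hf.comp (continuous_const.mul continuous_id)).intervalIntegrable _ _
  have hswap : (∫ x in ((a : ℝ)/q)..(((a : ℝ) + 1)/q), ∑ k ∈ Finset.Icc 1 t, f ((k : ℝ) * x))
      = ∑ k ∈ Finset.Icc 1 t, ∫ x in ((a : ℝ)/q)..(((a : ℝ) + 1)/q), f ((k : ℝ) * x) :=
    intervalIntegral.integral_finset_sum hintk

  have hterm : ∀ k ∈ Finset.Icc 1 t,
      (∫ x in ((a : ℝ)/q)..(((a : ℝ) + 1)/q), f ((k : ℝ) * x)) = ((k : ℝ))⁻¹ * g k := by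
    intro k hk
    have hk1 : 1 ≤ k := (Finset.mem_Icc.mp hk).1
    have hkR : ((k : ℝ)) ≠ 0 := Nat.cast_ne_zero.mpr (by omega)
    rw [intervalIntegral.integral_comp_mul_left f hkR]
    rw [smul_eq_mul]
    congr 1
    rw [← hdiff]
    have e1 : (k : ℝ) * ((a : ℝ)/q) = (((a * k : ℕ) : ℝ)) / q := by push_cast; ring
    have e2 : (k : ℝ) * (((a : ℝ) + 1)/q) = ((((a + 1) * k : ℕ) : ℝ)) / q := by push_cast; ring
    rw [e1, e2, hval, hval]
  rw [hswap, Finset.sum_congr rfl hterm]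
  -- Abel summation
  have hIcc : ∑ k ∈ Finset.Icc 1 t, ((k : ℝ))⁻¹ * g k
      = ∑ i ∈ range t, (((i : ℝ) + 1))⁻¹ • g (i + 1) := by
    rw [Finset.range_eq_Ico, ← Finset.Ico_add_one_right_eq_Icc, Finset.sum_Ico_eq_sum_range,
      Finset.sum_Ico_eq_sum_range]
    refine Finset.sum_congr (by congr 1) (fun i _ => ?_)
    simp only [smul_eq_mul]
    congr 2 <;> push_cast <;> ring
  rw [hIcc]
  rw [Finset.sum_range_by_parts (fun i => (((i : ℝ) + 1))⁻¹) (fun i => g (i + 1)) t]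
  have hSt : ∀ n, (∑ i ∈ range n, g (i + 1)) = S n := fun n => rfl
  have hcast : (((t - 1 : ℕ) : ℝ) + 1) = (t : ℝ) := by
    have : ((t - 1 : ℕ) : ℝ) = (t : ℝ) - 1 := by
      have : (1:ℕ) ≤ t := ht
      push_cast [Nat.cast_sub this]; ring
    rw [this]; ring
  have htR : (0 : ℝ) < t := by exact_mod_cast ht
  have hB : 0 ≤ M * ((q:ℝ) - 1) := by
    have : (1:ℝ) ≤ q := by exact_mod_cast hq
    nlinarith
  have hmono : ∀ i : ℕ, (((i:ℝ) + 1 + 1))⁻¹ ≤ (((i:ℝ) + 1))⁻¹ := by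
    intro i
    exact inv_anti₀ (by positivity) (by linarith)
  calc |(((t-1:ℕ):ℝ) + 1)⁻¹ • S t
        - ∑ i ∈ range (t-1), ((((i+1:ℕ):ℝ) + 1)⁻¹ - (((i:ℕ):ℝ) + 1)⁻¹) • S (i+1)|
      ≤ |(((t-1:ℕ):ℝ) + 1)⁻¹ • S t|
        + |∑ i ∈ range (t-1), ((((i+1:ℕ):ℝ) + 1)⁻¹ - (((i:ℕ):ℝ) + 1)⁻¹) • S (i+1)| :=
        abs_sub _ _
    _ ≤ (t:ℝ)⁻¹ * (M * ((q:ℝ) - 1))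
        + ∑ i ∈ range (t-1), ((((i:ℕ):ℝ) + 1)⁻¹ - (((i+1:ℕ):ℝ) + 1)⁻¹) * (M * ((q:ℝ) - 1)) := by
        gcongr ?_ + ?_
        · rw [smul_eq_mul, abs_mul, hcast, abs_of_pos (by positivity)]
          exact mul_le_mul_of_nonneg_left (hSbound t) (by positivity)
        · refine (Finset.abs_sum_le_sum_abs _ _).trans (Finset.sum_le_sum fun i _ => ?_)
          rw [smul_eq_mul, abs_mul]
          have h1 : |(((i+1:ℕ):ℝ) + 1)⁻¹ - (((i:ℕ):ℝ) + 1)⁻¹|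
              = (((i:ℕ):ℝ) + 1)⁻¹ - (((i+1:ℕ):ℝ) + 1)⁻¹ := by
            rw [abs_sub_comm, abs_of_nonneg]
            push_cast
            linarith [hmono i]
          rw [h1]
          have h2 : 0 ≤ (((i:ℕ):ℝ) + 1)⁻¹ - (((i+1:ℕ):ℝ) + 1)⁻¹ := by
            push_cast; linarith [hmono i]
          exact mul_le_mul_of_nonneg_left (hSbound (i+1)) h2
    _ = M * ((q:ℝ) - 1) := by
        have htel : ∑ i ∈ range (t-1), ((((i:ℕ):ℝ) + 1)⁻¹ - (((i+1:ℕ):ℝ) + 1)⁻¹)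
            = ((0:ℝ) + 1)⁻¹ - (((t-1:ℕ):ℝ) + 1)⁻¹ := by
          have := Finset.sum_range_sub' (fun i : ℕ => (((i:ℕ):ℝ) + 1)⁻¹) (t-1)
          simpa using this
        rw [← Finset.sum_mul, htel, hcast]
        field_simp
        ring
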